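/- Let p be a prime and suppose that B ⊴ Γ are finite p-groups with B abelian, such that the homomorphism Γ/B → Aut(B) induced by conjugation is injective (equivalently, the centraliser of B in Γ equals B). Let r = rk(B). Then α(Γ) ≥ |Γ/B|^(1/r); that is, every abelian subgroup A of Γ satisfies [Γ:A]^r ≥ [Γ:B]. -/

import Mathlib

open Subgroup

private lemma aux_exp_card_le {p : ℕ} (hp : p.Prime) {H : Type*} [CommGroup H] [Finite H]
    (S : Finset H) (hgen : Subgroup.closure (S : Set H) = ⊤) (hexp : ∀ h : H, h ^ p = 1) :
    Nat.card H ≤ p ^ S.card := by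
  classical
  haveI : Fact (1 < p) := ⟨hp.one_lt⟩
  haveI : NeZero p := ⟨hp.ne_zero⟩
  set φ : (↥S → ZMod p) → H := fun f => ∏ s : ↥S, (s : H) ^ (f s).val with hφ
  have hmul : ∀ f g, φ (f + g) = φ f * φ g := by
    intro f g
    rw [hφ]
    simp only [← Finset.prod_mul_distrib]
    refine Finset.prod_congr rfl fun s _ => ?_
    rw [Pi.add_apply, ZMod.val_add, ← pow_eq_pow_mod _ (hexp (s : H)), pow_add]
  have hzero : φ 0 = 1 := by
    rw [hφ]
    simp
  have hpow : ∀ (f) (n : ℕ), (φ f) ^ n = φ (n • f) := by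
    intro f n
    induction n with
    | zero => simpa using hzero.symm
    | succ n ih => rw [pow_succ, ih, succ_nsmul, hmul]
  have hsurj : Function.Surjective φ := by
    intro h
    have hmem : h ∈ Subgroup.closure (S : Set H) := by rw [hgen]; trivial
    induction hmem using Subgroup.closure_induction with
    | mem x hx =>
      refine ⟨fun s => if s = ⟨x, hx⟩ then 1 else 0, ?_⟩
      rw [hφ]
      have : ∀ s : ↥S, (s : H) ^ ((if s = (⟨x, hx⟩ : ↥S) then (1 : ZMod p) else 0)).val
          = if s = (⟨x, hx⟩ : ↥S) then x else 1 := by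
        intro s
        split
        · next hs => rw [hs, ZMod.val_one, pow_one]
        · rw [ZMod.val_zero, pow_zero]
      simp only [this]
      simp
    | one => exact ⟨0, hzero⟩
    | mul x y hx hy ihx ihy =>
      obtain ⟨f, rfl⟩ := ihx
      obtain ⟨g, rfl⟩ := ihy
      exact ⟨f + g, hmul f g⟩
    | inv x hx ihx =>
      obtain ⟨f, rfl⟩ := ihx
      refine ⟨(p - 1) • f, ?_⟩
      rw [← hpow]
      refine eq_inv_of_mul_eq_one_left ?_
      rw [← pow_succ, Nat.sub_add_cancel hp.one_le]
      exact hexp _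
  calc Nat.card H ≤ Nat.card (↥S → ZMod p) := Nat.card_le_card_of_surjective φ hsurj
    _ = p ^ S.card := by
        rw [Nat.card_fun, Nat.card_zmod, Nat.card_eq_finsetCard]
universe v

private lemma aux_hom_card_le {p r : ℕ} (hp : p.Prime) {H : Type*} [CommGroup H] [Finite H]
    (hH : Nat.card ((powMonoidHom p : H →* H).ker) ≤ p ^ r) :
    ∀ (n : ℕ) (U : Type v) [CommGroup U] [Finite U], IsPGroup p U → Nat.card U ≤ n →
      Nat.card (U →* H) ≤ Nat.card U ^ r := by
  haveI : Fact p.Prime := ⟨hp⟩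
  intro n
  induction n with
  | zero =>
    intro U _ _ _ hle
    exact absurd (Nat.card_pos (α := U)) (by omega)
  | succ n ih =>
    intro U _ _ hU hle
    haveI : Finite (U →* H) := Finite.of_injective _ DFunLike.coe_injective
    by_cases hU1 : Nat.card U = 1
    · have hsub : Subsingleton U := (Nat.card_eq_one_iff_unique.mp hU1).1
      have : Nat.card (U →* H) = 1 := by
        refine Nat.card_eq_one_iff_unique.mpr ⟨⟨fun f g => ?_⟩, ⟨1⟩⟩
        ext x
        rw [Subsingleton.elim x 1, map_one, map_one]
      rw [this, hU1, one_pow]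
    · -- find an element of order p
      obtain ⟨g, hg⟩ : ∃ g : U, g ≠ 1 := by
        by_contra hcon
        push_neg at hcon
        exact hU1 (Nat.card_eq_one_iff_unique.mpr
          ⟨⟨fun a b => by rw [hcon a, hcon b]⟩, ⟨1⟩⟩)
      obtain ⟨k, hk⟩ := hU g
      obtain ⟨m, hmk, hm⟩ := (Nat.dvd_prime_pow hp).mp (orderOf_dvd_of_pow_eq_one hk)
      have hm0 : m ≠ 0 := by
        intro h
        rw [h, pow_zero, orderOf_eq_one_iff] at hm
        exact hg hm
      set u : U := g ^ (p ^ (m - 1)) with hu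
      have hup : u ^ p = 1 := by
        rw [hu, ← pow_mul, ← pow_succ, Nat.sub_add_cancel (Nat.one_le_iff_ne_zero.mpr hm0),
          ← hm, pow_orderOf_eq_one]
      have hu1 : u ≠ 1 := by
        intro h
        have : orderOf g ∣ p ^ (m - 1) := orderOf_dvd_of_pow_eq_one (hu ▸ h)
        rw [hm] at this
        have h1 := Nat.le_of_dvd (pow_pos hp.pos (m - 1)) this
        have h2 := Nat.pow_lt_pow_right hp.one_lt (Nat.sub_lt (Nat.pos_of_ne_zero hm0) one_pos)
        omega
      have hordu : orderOf u = p := orderOf_eq_prime hup hu1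
      set Z : Subgroup U := Subgroup.zpowers u with hZ
      have hcardZ : Nat.card Z = p := by rw [hZ, Nat.card_zpowers, hordu]
      have hquot : Nat.card U = Nat.card (U ⧸ Z) * p := by
        rw [← hcardZ]
        exact Subgroup.card_eq_card_quotient_mul_card_subgroup Z
      have hQpos : 0 < Nat.card (U ⧸ Z) := Nat.card_pos
      have hQlt : Nat.card (U ⧸ Z) < Nat.card U := by
        have hp2 := hp.two_le
        have : Nat.card (U ⧸ Z) * 2 ≤ Nat.card (U ⧸ Z) * p := Nat.mul_le_mul_left _ hp2
        omega
      have hQle : Nat.card (U ⧸ Z) ≤ n := by omega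
      have IH := ih (U ⧸ Z) (hU.to_quotient Z) hQle
      -- evaluation at u
      set ev : (U →* H) →* H :=
        { toFun := fun f => f u
          map_one' := rfl
          map_mul' := fun _ _ => rfl } with hev
      have hrange : ev.range ≤ (powMonoidHom p : H →* H).ker := by
        rintro x ⟨f, rfl⟩
        rw [MonoidHom.mem_ker]
        show (ev f) ^ p = 1
        rw [hev]
        show (f u) ^ p = 1
        rw [← map_pow, hup, map_one]
      have c_range : Nat.card ev.range ≤ p ^ r :=
        le_trans (Subgroup.card_le_of_le hrange) hH
      -- kernel injects into homs from the quotient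
      haveI : Finite (U ⧸ Z →* H) := Finite.of_injective _ DFunLike.coe_injective
      have hkerlift : ∀ f : ev.ker, Z ≤ ((f : U →* H)).ker := by
        rintro f z hz
        obtain ⟨j, rfl⟩ := Subgroup.mem_zpowers_iff.mp hz
        rw [MonoidHom.mem_ker, map_zpow]
        have hfu : (f : U →* H) u = 1 := f.2
        rw [hfu, one_zpow]
      have c_ker : Nat.card ev.ker ≤ Nat.card (U ⧸ Z →* H) := by
        refine Nat.card_le_card_of_injective
          (fun f => QuotientGroup.lift Z (f : U →* H) (hkerlift f)) ?_
        intro f f' hff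
        refine Subtype.ext (MonoidHom.ext fun x => ?_)
        have := DFunLike.congr_fun hff (QuotientGroup.mk x)
        simpa [QuotientGroup.lift_mk'] using this
      have hsplit : Nat.card (U →* H) = Nat.card ((U →* H) ⧸ ev.ker) * Nat.card ev.ker :=
        Subgroup.card_eq_card_quotient_mul_card_subgroup ev.ker
      have hqr : Nat.card ((U →* H) ⧸ ev.ker) = Nat.card ev.range :=
        Nat.card_congr (QuotientGroup.quotientKerEquivRange ev).toEquiv
      calc Nat.card (U →* H) = Nat.card ev.range * Nat.card ev.ker := by rw [hsplit, hqr]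
        _ ≤ (p ^ r) * (Nat.card (U ⧸ Z)) ^ r :=
            Nat.mul_le_mul c_range (le_trans c_ker IH)
        _ = (Nat.card (U ⧸ Z) * p) ^ r := by rw [mul_pow, mul_comm]
        _ = Nat.card U ^ r := by rw [← hquot]

private lemma aux_ker_pow_card_le {p : ℕ} (hp : p.Prime) {H : Type*} [CommGroup H] [Finite H] :
    Nat.card ((powMonoidHom p : H →* H).ker) ≤ p ^ Group.rank H := by
  classical
  obtain ⟨S, hScard, hSgen⟩ := Group.rank_spec H
  set φ : H →* H := powMonoidHom p with hφdef
  set R : Subgroup H := φ.range with hRdef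
  -- card of kernel equals card of quotient by range
  have c1 : Nat.card (H ⧸ φ.ker) * Nat.card φ.ker = Nat.card H :=
    (Subgroup.card_eq_card_quotient_mul_card_subgroup φ.ker).symm
  have c2 : Nat.card (H ⧸ φ.ker) = Nat.card R :=
    Nat.card_congr (QuotientGroup.quotientKerEquivRange φ).toEquiv
  have c3 : Nat.card (H ⧸ R) * Nat.card R = Nat.card H :=
    (Subgroup.card_eq_card_quotient_mul_card_subgroup R).symm
  have hRpos : 0 < Nat.card R := Nat.card_pos
  have hker_eq : Nat.card φ.ker = Nat.card (H ⧸ R) := by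
    have : Nat.card R * Nat.card φ.ker = Nat.card (H ⧸ R) * Nat.card R := by
      rw [c3, ← c1, c2]
    nlinarith [this]
  rw [hker_eq]
  -- the quotient has exponent p and is generated by the image of S
  have hexp : ∀ x : H ⧸ R, x ^ p = 1 := by
    intro x
    refine QuotientGroup.induction_on x fun h => ?_
    have hcast : ((h : H ⧸ R)) ^ p = ((h ^ p : H) : H ⧸ R) :=
      (map_pow (QuotientGroup.mk' R) h p).symm
    rw [hcast, QuotientGroup.eq_one_iff]
    exact ⟨h, rfl⟩
  have hgen : Subgroup.closure ((S.image (QuotientGroup.mk : H → H ⧸ R) : Finset (H ⧸ R)) :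
      Set (H ⧸ R)) = ⊤ := by
    rw [Finset.coe_image]
    have : ((QuotientGroup.mk : H → H ⧸ R) '' (S : Set H)) =
        ((QuotientGroup.mk' R : H →* H ⧸ R) '' (S : Set H)) := rfl
    rw [this, ← MonoidHom.map_closure, hSgen, Subgroup.map_top_of_surjective]
    exact QuotientGroup.mk'_surjective R
  calc Nat.card (H ⧸ R) ≤ p ^ (S.image (QuotientGroup.mk : H → H ⧸ R)).card :=
        aux_exp_card_le hp _ hgen hexp
    _ ≤ p ^ S.card := Nat.pow_le_pow_right hp.pos Finset.card_image_le
    _ = p ^ Group.rank H := by rw [hScard]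

/-- **Theorem (lower bound for `α(Γ)`).**
Let `B ⊴ Γ` be finite `p`-groups with `B` abelian such that the conjugation homomorphism
`Γ/B → Aut(B)` is injective, i.e. the kernel of the conjugation map `Γ →* Aut(B)` is
exactly `B` (equivalently, the centraliser of `B` in `Γ` is `B`). If `r = rk(B)`, then
`α(Γ) ≥ |Γ/B|^(1/r)`: every abelian subgroup `A` of `Γ` satisfies `[Γ:A]^r ≥ [Γ:B]`. -/
theorem stmt_4 (p : ℕ) (hp : p.Prime) (Γ : Type*) [Group Γ] [Finite Γ]
    (hΓ : IsPGroup p Γ) (B : Subgroup Γ) [B.Normal] (hB : IsMulCommutative B)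
    (hker : (MulAut.conjNormal : Γ →* MulAut B).ker = B)
    (r : ℕ) (hr : r = Group.rank B)
    (A : Subgroup Γ) (hA : IsMulCommutative A) :
    B.index ≤ A.index ^ r := by
  classical
  haveI := hB
  haveI := hA
  letI : CommGroup ↥B := { (inferInstance : Group ↥B) with mul_comm := hB.is_comm.comm }
  letI : CommGroup ↥A := { (inferInstance : Group ↥A) with mul_comm := hA.is_comm.comm }
  rcases Nat.eq_zero_or_pos r with hr0 | hrpos
  · -- r = 0 : B is trivial, hence Γ is trivial
    subst hr0
    obtain ⟨S, hScard, hSgen⟩ := Group.rank_spec (↥B)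
    rw [← hr] at hScard
    have hSempty : S = ∅ := Finset.card_eq_zero.mp hScard
    rw [hSempty] at hSgen
    simp only [Finset.coe_empty, Subgroup.closure_empty] at hSgen
    have hBtriv : ∀ x : ↥B, x = 1 := by
      intro x
      have : x ∈ (⊥ : Subgroup ↥B) := by rw [hSgen]; trivial
      exact Subgroup.mem_bot.mp this
    haveI : Subsingleton ↥B := ⟨fun a b => by rw [hBtriv a, hBtriv b]⟩
    have hGamma : ∀ γ : Γ, γ ∈ B := by
      intro γ
      rw [← hker, MonoidHom.mem_ker]
      exact MulEquiv.ext fun x => Subsingleton.elim _ _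
    have hBtop : B = ⊤ := (Subgroup.eq_top_iff' B).mpr hGamma
    rw [hBtop, Subgroup.index_top, pow_zero]
  · -- main case
    set C : Subgroup Γ := B ⊓ Subgroup.centralizer (A : Set Γ) with hC
    -- the commutator-with-a homomorphisms
    set φ : ↥A → (↥B →* ↥B) :=
      fun a => (MulAut.conjNormal (a : Γ)).toMonoidHom * (MonoidHom.id ↥B)⁻¹ with hφ
    have hφ_apply : ∀ (a : ↥A) (b : ↥B), φ a b = MulAut.conjNormal (a : Γ) b * b⁻¹ := by
      intro a b
      rw [hφ]
      rfl
    have hφker : ∀ a : ↥A, C.subgroupOf B ≤ (φ a).ker := by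
      intro a b hb
      rw [Subgroup.mem_subgroupOf, hC] at hb
      have hcomm : (a : Γ) * (b : Γ) = (b : Γ) * (a : Γ) :=
        Subgroup.mem_centralizer_iff.mp hb.2 (a : Γ) a.2
      rw [MonoidHom.mem_ker, hφ_apply, mul_inv_eq_one]
      ext
      rw [MulAut.conjNormal_apply, hcomm]
      group
    set U := ↥B ⧸ C.subgroupOf B with hU
    set Ψ : ↥A → (U →* ↥B) := fun a => QuotientGroup.lift (C.subgroupOf B) (φ a) (hφker a)
      with hΨ
    have hΨ_mk : ∀ (a : ↥A) (b : ↥B), Ψ a (QuotientGroup.mk b) = φ a b := by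
      intro a b
      rw [hΨ]
      rfl
    -- conjugation only depends on the coset mod B, for elements of A
    have hconst : ∀ a b : ↥A, (QuotientGroup.leftRel (B.subgroupOf A)) a b → Ψ a = Ψ b := by
      intro a b hab
      rw [QuotientGroup.leftRel_apply, Subgroup.mem_subgroupOf] at hab
      -- (↑a)⁻¹ * ↑b ∈ B
      refine MonoidHom.ext fun x => ?_
      refine QuotientGroup.induction_on x fun β => ?_
      rw [hΨ_mk, hΨ_mk, hφ_apply, hφ_apply, mul_left_inj]
      ext
      rw [MulAut.conjNormal_apply, MulAut.conjNormal_apply]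
      set d : ↥B := ⟨(a : Γ)⁻¹ * (b : Γ), hab⟩ with hd
      have hbd : (b : Γ) = (a : Γ) * (d : Γ) := by rw [hd]; group
      have hcomm : (d : Γ) * (β : Γ) = (β : Γ) * (d : Γ) := by
        have := mul_comm d β
        exact congrArg Subtype.val this
      rw [hbd, mul_inv_rev, mul_assoc (a : Γ) (d : Γ) (β : Γ), hcomm]
      group
    have hinj : Function.Injective (Quotient.lift Ψ hconst :
        (↥A ⧸ B.subgroupOf A) → (U →* ↥B)) := by
      intro x y
      refine QuotientGroup.induction_on x fun a => ?_
      refine QuotientGroup.induction_on y fun b => ?_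
      intro hab
      have hψ : Ψ a = Ψ b := hab
      have hpoint : ∀ β : ↥B, MulAut.conjNormal (a : Γ) β = MulAut.conjNormal (b : Γ) β := by
        intro β
        have := DFunLike.congr_fun hψ (QuotientGroup.mk β)
        rw [hΨ_mk, hΨ_mk, hφ_apply, hφ_apply] at this
        exact mul_right_cancel this
      have hmem : (a : Γ)⁻¹ * (b : Γ) ∈ B := by
        rw [← hker, MonoidHom.mem_ker, map_mul, map_inv]
        have : (MulAut.conjNormal (a : Γ) : MulAut ↥B) = MulAut.conjNormal (b : Γ) :=
          MulEquiv.ext hpoint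
        rw [this]
        exact inv_mul_cancel _
      exact (QuotientGroup.eq).mpr (Subgroup.mem_subgroupOf.mpr (by
        simpa using hmem))
    have hcard1 : Nat.card (↥A ⧸ B.subgroupOf A) ≤ Nat.card (U →* ↥B) := by
      haveI : Finite (U →* ↥B) := Finite.of_injective _ DFunLike.coe_injective
      exact Nat.card_le_card_of_injective _ hinj
    -- the Hom bound
    haveI : Group.FG ↥B := Group.fg_of_finite
    have hkerpow : Nat.card ((powMonoidHom p : ↥B →* ↥B).ker) ≤ p ^ r := by
      calc Nat.card ((powMonoidHom p : ↥B →* ↥B).ker) ≤ p ^ Group.rank ↥B :=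
            aux_ker_pow_card_le hp
        _ = p ^ r := by rw [hr]
    have hcard2 : Nat.card (U →* ↥B) ≤ Nat.card U ^ r :=
      aux_hom_card_le hp hkerpow (Nat.card U) U ((hΓ.to_subgroup B).to_quotient _) le_rfl
    -- translate to relindex
    have key : B.relIndex A ≤ (C.relIndex B) ^ r := by
      rw [Subgroup.relIndex, Subgroup.relIndex, Subgroup.index_eq_card, Subgroup.index_eq_card]
      exact le_trans hcard1 hcard2
    -- positivity of indices
    have hpos : ∀ (H K : Subgroup Γ), 0 < H.relIndex K := by
      intro H K
      rw [Subgroup.relIndex, Subgroup.index_eq_card]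
      exact Nat.card_pos
    -- A ⊓ B ≤ C
    have hABC : A ⊓ B ≤ C := by
      rw [hC]
      refine le_inf inf_le_right ?_
      intro x hx
      refine Subgroup.mem_centralizer_iff.mpr fun h hh => ?_
      have := mul_comm (⟨h, hh⟩ : ↥A) ⟨x, hx.1⟩
      exact congrArg Subtype.val this
    have h4a : C.relIndex B ≤ (A ⊓ B).relIndex B :=
      Nat.le_of_dvd (hpos _ _) (Subgroup.relIndex_dvd_of_le_left B hABC)
    have h4b : (A ⊓ B).relIndex B = A.relIndex B := Subgroup.inf_relIndex_right A B
    have h4c : A.relIndex B ≤ A.relIndex (A ⊔ B) :=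
      Subgroup.relIndex_le_of_le_right le_sup_right (hpos _ _).ne'
    have h1 : B.relIndex (A ⊔ B) * (A ⊔ B).index = B.index :=
      Subgroup.relIndex_mul_index le_sup_right
    have h2 : B.relIndex (A ⊔ B) = B.relIndex A := Subgroup.relIndex_sup_right A B
    have h5 : A.relIndex (A ⊔ B) * (A ⊔ B).index = A.index :=
      Subgroup.relIndex_mul_index le_sup_left
    calc B.index = B.relIndex A * (A ⊔ B).index := by rw [← h1, h2]
      _ ≤ (C.relIndex B) ^ r * (A ⊔ B).index := Nat.mul_le_mul_right _ key
      _ ≤ (A.relIndex (A ⊔ B)) ^ r * ((A ⊔ B).index) ^ r := by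
          refine Nat.mul_le_mul ?_ ?_
          · exact Nat.pow_le_pow_left (le_trans h4a (by rw [h4b]; exact h4c)) r
          · exact Nat.le_self_pow hrpos.ne' _
      _ = (A.relIndex (A ⊔ B) * (A ⊔ B).index) ^ r := (mul_pow _ _ _).symm
      _ = A.index ^ r := by rw [h5]
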